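/- Let x be a random vector in ℝ^n with mean μ and covariance Σ, and let a ∈ ℝ^n, b ∈ ℝ, 0 < ε < 1. Then the distributionally robust chance constraint inf_{x ~ (μ,Σ)} Pr(aᵀx + b ≤ 0) ≥ 1 − ε (the infimum over all distributions with mean μ and covariance Σ) holds if and only if aᵀμ + b + √((1−ε)/ε)·√(aᵀΣa) ≤ 0. -/

import Mathlib

open MeasureTheory Matrix ENNReal

section aux
variable {n : ℕ} (μ : Fin n → ℝ) (a : Fin n → ℝ)

noncomputable def Lc (x : Fin n → ℝ) : ℝ := ∑ i, a i * (x i - μ i)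

lemma Lc_eq (b : ℝ) (x : Fin n → ℝ) : Lc μ a x = a ⬝ᵥ x + b - (a ⬝ᵥ μ + b) := by
  simp only [Lc, dotProduct, mul_sub]
  rw [Finset.sum_sub_distrib]; ring

variable {ν : Measure (Fin n → ℝ)} [IsProbabilityMeasure ν]
  (hint1 : ∀ i, Integrable (fun x => x i) ν)
  (hint2 : ∀ i j, Integrable (fun x => (x i - μ i) * (x j - μ j)) ν)

include hint1 in
lemma Lc_int : Integrable (Lc μ a) ν := by
  refine integrable_finset_sum _ fun i _ => ?_
  exact (((hint1 i).sub (integrable_const (μ i))).const_mul (a i))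

lemma Lc_sq_eq (x : Fin n → ℝ) :
    (Lc μ a x) ^ 2 = ∑ i, ∑ j, (a i * a j) * ((x i - μ i) * (x j - μ j)) := by
  rw [Lc, sq, Finset.sum_mul_sum]
  refine Finset.sum_congr rfl fun i _ => Finset.sum_congr rfl fun j _ => by ring

include hint2 in
lemma Lc_sq_int : Integrable (fun x => (Lc μ a x) ^ 2) ν := by
  have h : (fun x => (Lc μ a x) ^ 2)
      = fun x => ∑ i, ∑ j, (a i * a j) * ((x i - μ i) * (x j - μ j)) :=
    funext fun x => Lc_sq_eq μ a x
  rw [h]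
  exact integrable_finset_sum _ fun i _ => integrable_finset_sum _ fun j _ =>
    ((hint2 i j).const_mul _)

include hint1 in
lemma Lc_integral (hm1 : ∀ i, ∫ x, x i ∂ν = μ i) :
    ∫ x, Lc μ a x ∂ν = 0 := by
  have hInt : ∀ i : Fin n, Integrable (fun x : Fin n → ℝ => a i * (x i - μ i)) ν :=
    fun i => by exact ((hint1 i).sub (integrable_const (μ i))).const_mul (a i)
  simp only [Lc]
  rw [integral_finset_sum _ (fun i _ => hInt i)]
  refine Finset.sum_eq_zero fun i _ => ?_
  rw [integral_const_mul, integral_sub (hint1 i) (integrable_const _), hm1 i,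
    integral_const, probReal_univ, one_smul, sub_self, mul_zero]

include hint2 in
lemma Lc_sq_integral {S : Matrix (Fin n) (Fin n) ℝ}
    (hm2 : ∀ i j, ∫ x, (x i - μ i) * (x j - μ j) ∂ν = S i j) :
    ∫ x, (Lc μ a x) ^ 2 ∂ν = a ⬝ᵥ S.mulVec a := by
  have h : (fun x => (Lc μ a x) ^ 2)
      = fun x => ∑ i, ∑ j, (a i * a j) * ((x i - μ i) * (x j - μ j)) :=
    funext fun x => Lc_sq_eq μ a x
  rw [h, integral_finset_sum _ (fun i _ => integrable_finset_sum _ fun j _ =>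
    ((hint2 i j).const_mul _))]
  have h2 : ∀ i : Fin n, ∫ x, ∑ j, (a i * a j) * ((x i - μ i) * (x j - μ j)) ∂ν
      = ∑ j, (a i * a j) * S i j := by
    intro i
    rw [integral_finset_sum _ (fun j _ => ((hint2 i j).const_mul _))]
    exact Finset.sum_congr rfl fun j _ => by rw [integral_const_mul, hm2 i j]
  simp only [h2]
  simp only [dotProduct, mulVec, Finset.mul_sum]
  exact Finset.sum_congr rfl fun i _ => Finset.sum_congr rfl fun j _ => by ring

lemma measurable_lin (b : ℝ) : Measurable (fun x : Fin n → ℝ => a ⬝ᵥ x + b) := by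
  simp only [dotProduct]
  exact (Finset.measurable_sum _ fun i _ =>
    (by fun_prop : Measurable fun x : Fin n → ℝ => a i * x i)).add_const b

end aux

set_option maxHeartbeats 1000000 in
theorem drcc_backward (n : ℕ) (μ : Fin n → ℝ) (S : Matrix (Fin n) (Fin n) ℝ)
    (hS : S.PosSemidef) (a : Fin n → ℝ) (b : ℝ) (ε : ℝ) (hε0 : 0 < ε) (hε1 : ε < 1)
    (h : a ⬝ᵥ μ + b + Real.sqrt ((1 - ε) / ε) * Real.sqrt (a ⬝ᵥ S.mulVec a) ≤ 0)
    (ν : Measure (Fin n → ℝ)) (hprob : IsProbabilityMeasure ν)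
    (hint1 : ∀ i, Integrable (fun x => x i) ν)
    (hint2 : ∀ i j, Integrable (fun x => (x i - μ i) * (x j - μ j)) ν)
    (hm1 : ∀ i, ∫ x, x i ∂ν = μ i)
    (hm2 : ∀ i j, ∫ x, (x i - μ i) * (x j - μ j) ∂ν = S i j) :
    ν {x | a ⬝ᵥ x + b ≤ 0} ≥ ENNReal.ofReal (1 - ε) := by
  set m : ℝ := a ⬝ᵥ μ + b with hm_def
  set s0 : ℝ := a ⬝ᵥ S.mulVec a with hs0_def
  have hs0 : 0 ≤ s0 := by simpa using hS.dotProduct_mulVec_nonneg a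
  have hσ2 : Real.sqrt s0 * Real.sqrt s0 = s0 := Real.mul_self_sqrt hs0
  have hk2 : Real.sqrt ((1-ε)/ε) * Real.sqrt ((1-ε)/ε) = (1-ε)/ε :=
    Real.mul_self_sqrt (le_of_lt (div_pos (by linarith) hε0))
  have hEL : ∫ x, Lc μ a x ∂ν = 0 := Lc_integral μ a hint1 hm1
  have hEL2 : ∫ x, (Lc μ a x) ^ 2 ∂ν = s0 := Lc_sq_integral μ a hint2 hm2
  have key : ν {x | 0 < a ⬝ᵥ x + b} ≤ ENNReal.ofReal ε := by
    rcases lt_or_ge m 0 with hm | hm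
    · set u : ℝ := s0 / (-m) with hu_def
      have hu : 0 ≤ u := div_nonneg hs0 (by linarith)
      have hum : 0 < u - m := by linarith
      set c : ℝ := (u - m) ^ 2 with hc_def
      have hc : 0 < c := by positivity
      have hks : (1 - ε) * s0 ≤ ε * m ^ 2 := by
        have h1 : Real.sqrt ((1-ε)/ε) * Real.sqrt s0 ≤ -m := by linarith
        have h2 : (Real.sqrt ((1-ε)/ε) * Real.sqrt s0) * (Real.sqrt ((1-ε)/ε) * Real.sqrt s0)
            ≤ (-m) * (-m) := mul_self_le_mul_self (by positivity) h1
        rw [mul_mul_mul_comm, hk2, hσ2] at h2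
        rw [div_mul_eq_mul_div, div_le_iff₀ hε0] at h2
        nlinarith
      have hgoal : s0 + u ^ 2 ≤ ε * c := by
        have hm' : m ≠ 0 := ne_of_lt hm
        have hmm : (0:ℝ) < m^2 := by positivity
        have e0 : u * (-m) = s0 := div_mul_cancel₀ _ (by linarith)
        have e3 : s0*m^2 + s0^2 ≤ ε*(s0+m^2)^2 := by nlinarith [hks, hs0]
        rw [← mul_le_mul_iff_left₀ hmm]
        calc (s0 + u^2) * m^2 = s0*m^2 + (u*(-m))^2 := by ring
          _ = s0*m^2 + s0^2 := by rw [e0]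
          _ ≤ ε*(s0+m^2)^2 := e3
          _ = ε*((u-m)*(-m))^2 := by rw [sub_mul, e0]; ring
          _ = ε * c * m^2 := by rw [hc_def]; ring
      have hint_lin : Integrable (fun x => 2*u * Lc μ a x + u^2) ν :=
        ((Lc_int μ a hint1).const_mul (2*u)).add (integrable_const _)
      have hexp : (fun x => (Lc μ a x + u) ^ 2)
          = fun x => (Lc μ a x) ^ 2 + (2*u * Lc μ a x + u ^ 2) := by
        funext x; ring
      have hg_int : Integrable (fun x => (Lc μ a x + u) ^ 2) ν := by
        rw [hexp]; exact (Lc_sq_int μ a hint2).add hint_lin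
      have hEg : ∫ x, (Lc μ a x + u) ^ 2 ∂ν = s0 + u ^ 2 := by
        rw [hexp, integral_add (Lc_sq_int μ a hint2) hint_lin,
          integral_add ((Lc_int μ a hint1).const_mul (2*u)) (integrable_const _),
          integral_const_mul, hEL, hEL2, integral_const, probReal_univ,
          one_smul, mul_zero, zero_add]
      have markov := mul_meas_ge_le_integral_of_nonneg
        (Filter.Eventually.of_forall fun x => sq_nonneg (Lc μ a x + u)) hg_int c
      rw [hEg] at markov
      have hsub : {x : Fin n → ℝ | 0 < a ⬝ᵥ x + b} ⊆ {x | c ≤ (Lc μ a x + u) ^ 2} := by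
        intro x hx
        simp only [Set.mem_setOf_eq] at hx ⊢
        have hL : Lc μ a x = a ⬝ᵥ x + b - m := Lc_eq μ a b x
        nlinarith
      have hfin : ν {x | c ≤ (Lc μ a x + u) ^ 2} ≠ ⊤ := measure_ne_top ν _
      have htR : (ν {x | c ≤ (Lc μ a x + u) ^ 2}).toReal ≤ ε := by
        rw [← mul_le_mul_iff_right₀ hc]
        calc c * (ν {x | c ≤ (Lc μ a x + u) ^ 2}).toReal ≤ s0 + u ^ 2 := markov
          _ ≤ ε * c := hgoal
          _ = c * ε := by ring
      calc ν {x | 0 < a ⬝ᵥ x + b} ≤ ν {x | c ≤ (Lc μ a x + u) ^ 2} := measure_mono hsub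
        _ = ENNReal.ofReal ((ν {x | c ≤ (Lc μ a x + u) ^ 2}).toReal) :=
            (ENNReal.ofReal_toReal hfin).symm
        _ ≤ ENNReal.ofReal ε := ENNReal.ofReal_le_ofReal htR
    · have hkσ : Real.sqrt ((1-ε)/ε) * Real.sqrt s0 = 0 := by
        have h' : 0 ≤ Real.sqrt ((1-ε)/ε) * Real.sqrt s0 := by positivity
        linarith
      have hm0 : m = 0 := by nlinarith
      have hs00 : s0 = 0 := by
        have hk0' : 0 < Real.sqrt ((1-ε)/ε) :=
          Real.sqrt_pos.2 (div_pos (by linarith) hε0)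
        have h' : Real.sqrt s0 = 0 :=
          (mul_eq_zero.1 hkσ).resolve_left (ne_of_gt hk0')
        rw [← hσ2, h', mul_zero]
      have hzero : ∀ δ : ℝ, 0 < δ → ν {x | δ ≤ a ⬝ᵥ x + b} = 0 := by
        intro δ hδ
        have hsub : {x : Fin n → ℝ | δ ≤ a ⬝ᵥ x + b} ⊆ {x | δ^2 ≤ (Lc μ a x) ^ 2} := by
          intro x hx
          simp only [Set.mem_setOf_eq] at hx ⊢
          have hL : Lc μ a x = a ⬝ᵥ x + b - m := Lc_eq μ a b x
          nlinarith
        have markov := mul_meas_ge_le_integral_of_nonneg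
          (Filter.Eventually.of_forall fun x => sq_nonneg (Lc μ a x)) (Lc_sq_int μ a hint2) (δ^2)
        rw [hEL2, hs00] at markov
        have ht : (ν {x | δ^2 ≤ (Lc μ a x) ^ 2}).toReal ≤ 0 :=
          le_of_mul_le_mul_left (by simpa [Measure.real] using markov) (pow_pos hδ 2)
        have h2 : ν {x | δ^2 ≤ (Lc μ a x) ^ 2} = 0 :=
          (ENNReal.toReal_eq_zero_iff _).1 (le_antisymm ht ENNReal.toReal_nonneg)
            |>.resolve_right (measure_ne_top ν _)
        exact le_antisymm (h2 ▸ measure_mono hsub) zero_le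
      have hcover : {x : Fin n → ℝ | 0 < a ⬝ᵥ x + b}
          ⊆ ⋃ j : ℕ, {x | ((j:ℝ)+1)⁻¹ ≤ a ⬝ᵥ x + b} := by
        intro x hx
        simp only [Set.mem_setOf_eq] at hx
        obtain ⟨j, hj⟩ := exists_nat_one_div_lt hx
        exact Set.mem_iUnion.2 ⟨j, by
          simp only [Set.mem_setOf_eq]
          rw [one_div] at hj
          exact le_of_lt hj⟩
      have hz : ∀ j : ℕ, ν {x | ((j:ℝ)+1)⁻¹ ≤ a ⬝ᵥ x + b} = 0 :=
        fun j => hzero _ (by positivity)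
      calc ν {x | 0 < a ⬝ᵥ x + b} ≤ ∑' j : ℕ, ν {x | ((j:ℝ)+1)⁻¹ ≤ a ⬝ᵥ x + b} :=
            (measure_mono hcover).trans (measure_iUnion_le _)
        _ = 0 := by simp only [hz]; exact tsum_zero
        _ ≤ ENNReal.ofReal ε := zero_le
  have hmeas : MeasurableSet {x : Fin n → ℝ | 0 < a ⬝ᵥ x + b} :=
    measurableSet_lt measurable_const (measurable_lin a b)
  have hcompl : {x : Fin n → ℝ | a ⬝ᵥ x + b ≤ 0} = {x | 0 < a ⬝ᵥ x + b}ᶜ := by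
    ext x; simp [not_lt]
  rw [hcompl, prob_compl_eq_one_sub hmeas]
  calc ENNReal.ofReal (1 - ε) = 1 - ENNReal.ofReal ε := by
        rw [ENNReal.ofReal_sub _ (le_of_lt hε0), ENNReal.ofReal_one]
    _ ≤ 1 - ν {x | 0 < a ⬝ᵥ x + b} := tsub_le_tsub_left key 1


lemma integrable_smul_dirac {α E : Type*} [MeasurableSpace α] [MeasurableSingletonClass α]
    [NormedAddCommGroup E] (f : α → E) (x : α) {c : ℝ≥0∞} (hc : c ≠ ∞) :
    Integrable f (c • Measure.dirac x) := by
  refine ((integrable_const (f x)).congr ?_).smul_measure hc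
  rw [Filter.EventuallyEq, MeasureTheory.ae_dirac_eq]
  exact Filter.eventually_pure.2 rfl

lemma integral_sum_smul_dirac {ι α : Type*} [Fintype ι] [MeasurableSpace α]
    [MeasurableSingletonClass α] (c : ι → ℝ≥0∞) (hc : ∀ i, c i ≠ ∞) (pt : ι → α)
    (f : α → ℝ) :
    ∫ x, f x ∂(∑ i, c i • Measure.dirac (pt i)) = ∑ i, (c i).toReal * f (pt i) := by
  rw [integral_finset_sum_measure (fun i _ => integrable_smul_dirac f (pt i) (hc i))]
  refine Finset.sum_congr rfl fun i _ => ?_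
  rw [integral_smul_measure, integral_dirac, smul_eq_mul]

lemma integrable_sum_smul_dirac {ι α : Type*} [Fintype ι] [MeasurableSpace α]
    [MeasurableSingletonClass α] (c : ι → ℝ≥0∞) (hc : ∀ i, c i ≠ ∞) (pt : ι → α)
    (f : α → ℝ) : Integrable f (∑ i, c i • Measure.dirac (pt i)) :=
  integrable_finset_sum_measure.2 fun i _ => integrable_smul_dirac f (pt i) (hc i)

lemma meas_sum_smul_dirac {ι α : Type*} [Fintype ι] [MeasurableSpace α]
    [MeasurableSingletonClass α] (c : ι → ℝ≥0∞) (pt : ι → α) (A : Set α) :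
    (∑ i, c i • Measure.dirac (pt i)) A = ∑ i, c i * A.indicator 1 (pt i) := by
  rw [Measure.finset_sum_apply]
  refine Finset.sum_congr rfl fun i _ => ?_
  rw [Measure.smul_apply, Measure.dirac_apply, smul_eq_mul]

section fwd
variable {n : ℕ}

lemma sum_bbf {Mo : Type*} [AddCommMonoid Mo] (F : Bool × Bool × Fin n → Mo) :
    ∑ z, F z = ∑ kk : Fin n,
      (F (true,true,kk) + F (true,false,kk) + (F (false,true,kk) + F (false,false,kk))) := by
  rw [Fintype.sum_prod_type, Fintype.sum_bool]
  simp only [Fintype.sum_prod_type, Fintype.sum_bool]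
  rw [← Finset.sum_add_distrib, ← Finset.sum_add_distrib, ← Finset.sum_add_distrib]

lemma dot_mulVec_comm {A : Matrix (Fin n) (Fin n) ℝ} (hsym : ∀ i j, A i j = A j i)
    (v₁ v₂ : Fin n → ℝ) : v₁ ⬝ᵥ (A *ᵥ v₂) = v₂ ⬝ᵥ (A *ᵥ v₁) := by
  simp only [dotProduct, mulVec, Finset.mul_sum]
  rw [Finset.sum_comm]
  exact Finset.sum_congr rfl fun i _ => Finset.sum_congr rfl fun j _ => by
    rw [hsym j i]; ring

lemma herm_entry_symm {A : Matrix (Fin n) (Fin n) ℝ} (h : A.IsHermitian) (i j : Fin n) :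
    A i j = A j i := by
  have := h.apply i j
  simpa using this.symm

lemma psd_cs {S : Matrix (Fin n) (Fin n) ℝ} (hS : S.PosSemidef) (a z : Fin n → ℝ) :
    (z ⬝ᵥ (S *ᵥ a))^2 ≤ (z ⬝ᵥ (S *ᵥ z)) * (a ⬝ᵥ (S *ᵥ a)) := by
  have hsym := herm_entry_symm hS.1
  have key : ∀ tt : ℝ, 0 ≤ (a ⬝ᵥ (S *ᵥ a)) * (tt * tt) + (2 * (z ⬝ᵥ (S *ᵥ a))) * tt
      + (z ⬝ᵥ (S *ᵥ z)) := by
    intro tt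
    have h0 := hS.dotProduct_mulVec_nonneg (z + tt • a)
    simp only [star_trivial, mulVec_add, mulVec_smul, dotProduct_add, add_dotProduct,
      dotProduct_smul, smul_dotProduct, smul_eq_mul] at h0
    have h1 : a ⬝ᵥ (S *ᵥ z) = z ⬝ᵥ (S *ᵥ a) := dot_mulVec_comm hsym a z
    rw [h1] at h0
    linarith
  have hd := discrim_le_zero key
  rw [discrim] at hd
  nlinarith [hd]

open scoped MatrixOrder in
lemma psd_sqrt_exists {B : Matrix (Fin n) (Fin n) ℝ} (hB : B.PosSemidef) :
    ∃ M : Matrix (Fin n) (Fin n) ℝ, M.PosSemidef ∧ M * M = B :=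
  ⟨CFC.sqrt B, (CFC.sqrt_nonneg B).posSemidef, CFC.sqrt_mul_sqrt_self B hB.nonneg⟩
end fwd

set_option maxHeartbeats 2000000 in
theorem drcc_forward (n : ℕ) (μ : Fin n → ℝ) (S : Matrix (Fin n) (Fin n) ℝ)
    (hS : S.PosSemidef) (a : Fin n → ℝ) (b : ℝ) (ε : ℝ) (hε0 : 0 < ε) (hε1 : ε < 1)
    (hlhs : ∀ ν : Measure (Fin n → ℝ), IsProbabilityMeasure ν →
      (∀ i, Integrable (fun x => x i) ν) →
      (∀ i j, Integrable (fun x => (x i - μ i) * (x j - μ j)) ν) →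
      (∀ i, ∫ x, x i ∂ν = μ i) →
      (∀ i j, ∫ x, (x i - μ i) * (x j - μ j) ∂ν = S i j) →
      ν {x | a ⬝ᵥ x + b ≤ 0} ≥ ENNReal.ofReal (1 - ε)) :
    a ⬝ᵥ μ + b + Real.sqrt ((1 - ε) / ε) * Real.sqrt (a ⬝ᵥ S.mulVec a) ≤ 0 := by
  classical
  by_contra hcon
  push_neg at hcon
  -- notation
  set m : ℝ := a ⬝ᵥ μ + b with hm_def
  set s0 : ℝ := a ⬝ᵥ S.mulVec a with hs0_def
  set k : ℝ := Real.sqrt ((1-ε)/ε) with hk_def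
  set σ : ℝ := Real.sqrt s0 with hσ_def
  have hs0 : 0 ≤ s0 := by simpa using hS.dotProduct_mulVec_nonneg a
  have hσ0 : 0 ≤ σ := Real.sqrt_nonneg _
  have hσ2 : σ * σ = s0 := Real.mul_self_sqrt hs0
  have hk0 : 0 < k := Real.sqrt_pos.2 (div_pos (by linarith) hε0)
  have hk2 : k * k = (1-ε)/ε := Real.mul_self_sqrt (le_of_lt (div_pos (by linarith) hε0))
  -- the case n = 0
  rcases Nat.eq_zero_or_pos n with hn | hn
  · subst hn
    have hdot0 : ∀ v x : Fin 0 → ℝ, v ⬝ᵥ x = 0 := fun v x => by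
      simp [dotProduct]
    have hs00 : s0 = 0 := by rw [hs0_def]; exact hdot0 _ _
    have hb : 0 < b := by
      have : m = b := by rw [hm_def, hdot0]; ring
      rw [hσ_def, hs00, Real.sqrt_zero, mul_zero, add_zero, this] at hcon
      exact hcon
    have := hlhs (Measure.dirac (fun _ => 0)) (by infer_instance)
      (fun i => i.elim0) (fun i => i.elim0) (fun i => i.elim0) (fun i => i.elim0)
    have hempty : {x : Fin 0 → ℝ | a ⬝ᵥ x + b ≤ 0} = ∅ := by
      ext x; simp [hdot0, Set.mem_setOf_eq]; linarith
    rw [hempty] at this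
    simp only [measure_empty] at this
    rw [ge_iff_le, nonpos_iff_eq_zero, ENNReal.ofReal_eq_zero] at this
    linarith
  · -- main construction, n ≥ 1
    have hn0 : (n:ℝ) ≠ 0 := Nat.cast_ne_zero.2 hn.ne'
    have hnpos : (0:ℝ) < n := Nat.cast_pos.2 hn
    -- direction vector w with a ⬝ᵥ w = σ and S - wwᵀ psd
    set w : Fin n → ℝ := if σ = 0 then 0 else σ⁻¹ • (S *ᵥ a) with hw_def
    have haw : a ⬝ᵥ w = σ := by
      by_cases hσ : σ = 0
      · rw [hw_def, if_pos hσ, dotProduct_zero, hσ]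
      · rw [hw_def, if_neg hσ, dotProduct_smul, smul_eq_mul, ← hs0_def, ← hσ2]
        field_simp
    have hwz : ∀ z : Fin n → ℝ, (w ⬝ᵥ z) * (w ⬝ᵥ z) ≤ z ⬝ᵥ (S *ᵥ z) := by
      intro z
      by_cases hσ : σ = 0
      · rw [hw_def, if_pos hσ, zero_dotProduct, mul_zero]
        simpa using hS.dotProduct_mulVec_nonneg z
      · rw [hw_def, if_neg hσ, smul_dotProduct, smul_eq_mul]
        have hcs := psd_cs hS a z
        have hzs : (S *ᵥ a) ⬝ᵥ z = z ⬝ᵥ (S *ᵥ a) := dotProduct_comm _ _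
        rw [hzs]
        have hinv : σ * σ⁻¹ = 1 := mul_inv_cancel₀ hσ
        rw [← hs0_def, ← hσ2] at hcs
        have h2 := mul_le_mul_of_nonneg_right hcs (mul_self_nonneg σ⁻¹)
        have e : z ⬝ᵥ (S *ᵥ z) * (σ * σ) * (σ⁻¹ * σ⁻¹) = z ⬝ᵥ (S *ᵥ z) := by
          field_simp
        nlinarith [h2, e]
    set B : Matrix (Fin n) (Fin n) ℝ := S - vecMulVec w w with hB_def
    have hvmv : ∀ z : Fin n → ℝ, (vecMulVec w w) *ᵥ z = (w ⬝ᵥ z) • w := by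
      intro z; funext i
      simp only [mulVec, vecMulVec_apply, dotProduct, Pi.smul_apply, smul_eq_mul,
        Finset.mul_sum]
      rw [Finset.sum_mul]
      exact Finset.sum_congr rfl fun j _ => by ring
    have hBquad : ∀ z : Fin n → ℝ, z ⬝ᵥ (B *ᵥ z) = z ⬝ᵥ (S *ᵥ z) - (w ⬝ᵥ z) * (w ⬝ᵥ z) := by
      intro z
      rw [hB_def, sub_mulVec, dotProduct_sub, hvmv, dotProduct_smul, smul_eq_mul,
        dotProduct_comm z w]
    have hB : B.PosSemidef := by
      refine Matrix.PosSemidef.of_dotProduct_mulVec_nonneg ?_ ?_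
      · refine hS.1.sub ?_
        show (vecMulVec w w)ᴴ = vecMulVec w w
        ext i j
        simp [vecMulVec_apply, conjTranspose_apply, mul_comm]
      · intro z
        have h1 : star z = z := by funext i; simp
        rw [h1, hBquad z]
        have := hwz z
        linarith
    -- square root of B
    obtain ⟨M, hMpsd, hMM'⟩ := psd_sqrt_exists hB
    have hMsym : ∀ i j, M i j = M j i := herm_entry_symm hMpsd.1
    have hMM : M * M = B := hMM'
    have hBij : ∀ i j, B i j = ∑ kk, M i kk * M j kk := by
      intro i j
      rw [← hMM, Matrix.mul_apply]
      exact Finset.sum_congr rfl fun kk _ => by rw [hMsym kk j]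
    -- aᵀ B a = 0 and M *ᵥ a = 0
    have haBa : a ⬝ᵥ (B *ᵥ a) = 0 := by
      rw [hBquad a, dotProduct_comm w a, haw, hσ2, ← hs0_def, sub_self]
    have hvv : (M *ᵥ a) ⬝ᵥ (M *ᵥ a) = 0 := by
      have h1 : a ⬝ᵥ (B *ᵥ a) = a ⬝ᵥ (M *ᵥ (M *ᵥ a)) := by
        rw [mulVec_mulVec, hMM]
      have h2 : a ⬝ᵥ (M *ᵥ (M *ᵥ a)) = (M *ᵥ a) ⬝ᵥ (M *ᵥ a) :=
        dot_mulVec_comm hMsym a (M *ᵥ a)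
      rw [← h2, ← h1, haBa]
    have hv0 : ∀ kk, (M *ᵥ a) kk = 0 := by
      intro kk
      have hsum : ∑ j, (M *ᵥ a) j * (M *ᵥ a) j = 0 := hvv
      have := (Finset.sum_eq_zero_iff_of_nonneg
        (fun j _ => mul_self_nonneg ((M *ᵥ a) j))).1 hsum kk (Finset.mem_univ kk)
      exact mul_self_eq_zero.1 this
    have hvk : ∀ kk, ∑ i, a i * M i kk = 0 := by
      intro kk
      have : ∑ i, a i * M i kk = (M *ᵥ a) kk := by
        simp only [mulVec, dotProduct]
        exact Finset.sum_congr rfl fun i _ => by rw [hMsym i kk]; ring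
      rw [this, hv0]
    -- scalar parameters
    set t : ℝ := (max (-m/σ) 0 + k)/2 with ht_def
    have hmax0 : (0:ℝ) ≤ max (-m/σ) 0 := le_max_right _ _
    have ht0 : 0 < t := by
      rw [ht_def]; linarith [hmax0, hk0]
    have hmaxk : max (-m/σ) 0 < k := by
      rw [max_lt_iff]
      refine ⟨?_, hk0⟩
      by_cases hσ : σ = 0
      · rw [hσ]; simpa using hk0
      · have hσpos : 0 < σ := lt_of_le_of_ne hσ0 (Ne.symm hσ)
        rw [div_lt_iff₀ hσpos]
        nlinarith [hcon]
    have htk : t < k := by rw [ht_def]; linarith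
    have hmt : 0 < m + σ * t := by
      by_cases hσ : σ = 0
      · rw [hσ, zero_mul, add_zero]
        rw [hσ] at hcon; linarith
      · have hσpos : 0 < σ := lt_of_le_of_ne hσ0 (Ne.symm hσ)
        have h1 : -m/σ < t := by
          rw [ht_def]
          have := le_max_left (-m/σ) 0
          linarith
        rw [div_lt_iff₀ hσpos] at h1
        nlinarith
    have ht2 : 0 < 1 + t^2 := by positivity
    set p : ℝ := t^2/(1+t^2) with hp_def
    set q : ℝ := 1/(1+t^2) with hq_def
    have hp0 : 0 ≤ p := by rw [hp_def]; positivity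
    have hq0 : 0 ≤ q := by rw [hq_def]; positivity
    have hpq : p + q = 1 := by rw [hp_def, hq_def]; field_simp; ring
    have hp1 : p < 1 - ε := by
      rw [hp_def]
      rw [div_lt_iff₀ ht2]
      have htk2 : t^2 < (1-ε)/ε := by
        calc t^2 = t*t := sq t
          _ < k*k := by nlinarith
          _ = (1-ε)/ε := hk2
      rw [lt_div_iff₀ hε0] at htk2
      nlinarith [htk2]
    clear_value t p q
    -- two-point auxiliary identities
    have hqt : q * t = p / t := by
      rw [hp_def, hq_def]; field_simp
    have hqp2 : q * t^2 + p / t^2 = 1 := by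
      rw [hp_def, hq_def]; field_simp; ring
    -- atoms
    set tv : Bool → ℝ := fun s => if s then t else -1/t with htv_def
    set sgv : Bool → ℝ := fun g => if g then 1 else -1 with hsgv_def
    set r : ℝ := Real.sqrt n with hr_def
    have hr2 : r * r = (n:ℝ) := Real.mul_self_sqrt (Nat.cast_nonneg n)
    clear_value r
    set pt : Bool × Bool × Fin n → (Fin n → ℝ) :=
      fun z => fun i => μ i + w i * tv z.1 + sgv z.2.1 * (r * M i z.2.2) with hpt_def
    set cw : Bool × Bool × Fin n → ℝ≥0∞ :=
      fun z => ENNReal.ofReal ((if z.1 then q else p)/(2*n)) with hcw_def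
    have hcw_ne : ∀ z, cw z ≠ ∞ := fun z => ENNReal.ofReal_ne_top
    have hcw_nonneg : ∀ z : Bool × Bool × Fin n, 0 ≤ (if z.1 then q else p)/(2*n) := by
      intro z
      apply div_nonneg _ (by positivity)
      by_cases hz : z.1 <;> simp [hz, hp0, hq0]
    have hcwR : ∀ z, (cw z).toReal = (if z.1 then q else p)/(2*n) :=
      fun z => ENNReal.toReal_ofReal (hcw_nonneg z)
    set ν : Measure (Fin n → ℝ) := ∑ z, cw z • Measure.dirac (pt z) with hν_def
    have hIF : ∀ f : (Fin n → ℝ) → ℝ,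
        ∫ x, f x ∂ν = ∑ z, (cw z).toReal * f (pt z) :=
      fun f => integral_sum_smul_dirac cw hcw_ne pt f
    have hINT : ∀ f : (Fin n → ℝ) → ℝ, Integrable f ν :=
      fun f => integrable_sum_smul_dirac cw hcw_ne pt f
    -- probability measure
    have hprob : IsProbabilityMeasure ν := by
      constructor
      rw [hν_def, meas_sum_smul_dirac]
      simp only [Set.indicator_univ, Pi.one_apply, mul_one]
      calc ∑ z, cw z
          = ENNReal.ofReal (∑ z : Bool × Bool × Fin n, (if z.1 then q else p)/(2*n)) :=
            (ENNReal.ofReal_sum_of_nonneg (fun z _ => hcw_nonneg z)).symm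
        _ = ENNReal.ofReal 1 := by
            congr 1
            rw [sum_bbf]
            simp only [Bool.false_eq_true, if_true, if_false, ↓reduceIte]
            have e : q/(2*(n:ℝ)) + q/(2*(n:ℝ)) + (p/(2*(n:ℝ)) + p/(2*(n:ℝ))) = 1/n := by
              rw [hp_def, hq_def]
              field_simp
              ring
            rw [e, Finset.sum_const, Finset.card_univ, Fintype.card_fin, nsmul_eq_mul]
            field_simp
        _ = 1 := ENNReal.ofReal_one
    -- mean
    have hmean : ∀ i, ∫ x, x i ∂ν = μ i := by
      intro i
      rw [hIF (fun x => x i)]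
      simp only [hcwR, hpt_def, htv_def, hsgv_def]
      rw [sum_bbf]
      simp only [Bool.false_eq_true, if_true, if_false, ↓reduceIte]
      conv_rhs => rw [show μ i = ∑ _kk : Fin n, μ i / n by
        rw [Finset.sum_const, Finset.card_univ, Fintype.card_fin, nsmul_eq_mul]; field_simp]
      apply Finset.sum_congr rfl
      intro kk _
      linear_combination (μ i / n) * hpq + (w i / n) * hqt
    -- covariance
    have hcov : ∀ i j, ∫ x, (x i - μ i) * (x j - μ j) ∂ν = S i j := by
      intro i j
      rw [hIF (fun x => (x i - μ i) * (x j - μ j))]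
      simp only [hcwR, hpt_def, htv_def, hsgv_def]
      rw [sum_bbf]
      simp only [Bool.false_eq_true, if_true, if_false, ↓reduceIte]
      conv_rhs => rw [show S i j = ∑ kk : Fin n, (w i * w j / n + M i kk * M j kk) by
        rw [Finset.sum_add_distrib, Finset.sum_const, Finset.card_univ, Fintype.card_fin,
          nsmul_eq_mul, ← hBij]
        have hBij2 : B i j = S i j - w i * w j := by
          rw [hB_def]; simp [Matrix.sub_apply, vecMulVec_apply]
        rw [hBij2]; field_simp; ring]
      apply Finset.sum_congr rfl
      intro kk _
      have hninv : (n:ℝ) * ((n:ℝ))⁻¹ = 1 := mul_inv_cancel₀ hn0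
      linear_combination (w i * w j / n) * hqp2 + (M i kk * M j kk * (r*r) / n) * hpq
        + (M i kk * M j kk / n) * hr2 + (M i kk * M j kk) * hninv
    -- value of a ⬝ᵥ x + b on atoms
    have hYpt : ∀ z : Bool × Bool × Fin n, a ⬝ᵥ pt z + b = m + σ * tv z.1 := by
      intro z
      simp only [hpt_def, dotProduct]
      have expand : ∀ i, a i * (μ i + w i * tv z.1 + sgv z.2.1 * (r * M i z.2.2))
          = a i * μ i + (a i * w i) * tv z.1 + (sgv z.2.1 * r) * (a i * M i z.2.2) := by
        intro i; ring
      simp only [expand]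
      rw [Finset.sum_add_distrib, Finset.sum_add_distrib, ← Finset.sum_mul, ← Finset.mul_sum,
        hvk z.2.2, mul_zero, add_zero]
      have h2 : ∑ i, a i * w i = σ := haw
      rw [h2, hm_def]
      simp only [dotProduct]
      ring
    have hptY : ∀ z : Bool × Bool × Fin n, z.1 = true →
        pt z ∉ {x : Fin n → ℝ | a ⬝ᵥ x + b ≤ 0} := by
      intro z hz
      simp only [Set.mem_setOf_eq, not_le]
      rw [hYpt z, hz]
      have htvt : tv true = t := by simp only [htv_def, ↓reduceIte]
      rw [htvt]
      exact hmt
    -- the measure of the event is at most p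
    have hbound : ν {x | a ⬝ᵥ x + b ≤ 0} ≤ ENNReal.ofReal p := by
      rw [hν_def, meas_sum_smul_dirac]
      have step : ∀ z : Bool × Bool × Fin n,
          cw z * ({x : Fin n → ℝ | a ⬝ᵥ x + b ≤ 0}.indicator 1 (pt z))
          ≤ (if z.1 then 0 else ENNReal.ofReal (p/(2*n))) := by
        intro z
        by_cases hz : z.1
        · rw [if_pos hz, Set.indicator_of_notMem (hptY z hz), mul_zero]
        · rw [if_neg hz]
          have h1 : cw z = ENNReal.ofReal (p/(2*n)) := by
            rw [hcw_def]; simp only; rw [if_neg hz]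
          have hind : ({x : Fin n → ℝ | a ⬝ᵥ x + b ≤ 0}.indicator
              (1 : (Fin n → ℝ) → ℝ≥0∞) (pt z)) ≤ 1 := by
            by_cases hmem : pt z ∈ {x : Fin n → ℝ | a ⬝ᵥ x + b ≤ 0}
            · rw [Set.indicator_of_mem hmem]; exact le_rfl
            · rw [Set.indicator_of_notMem hmem]; exact zero_le
          calc cw z * ({x : Fin n → ℝ | a ⬝ᵥ x + b ≤ 0}.indicator 1 (pt z))
              ≤ cw z * 1 := mul_le_mul_right hind _
            _ = cw z := mul_one _
            _ = ENNReal.ofReal (p/(2*n)) := h1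
      calc ∑ z, cw z * ({x : Fin n → ℝ | a ⬝ᵥ x + b ≤ 0}.indicator 1 (pt z))
          ≤ ∑ z : Bool × Bool × Fin n, (if z.1 then 0 else ENNReal.ofReal (p/(2*n))) :=
            Finset.sum_le_sum (fun z _ => step z)
        _ = ENNReal.ofReal p := by
            rw [sum_bbf]
            simp only [Bool.false_eq_true, if_true, if_false, ↓reduceIte, zero_add]
            have hpn : (0:ℝ) ≤ p/(2*n) := div_nonneg hp0 (by positivity)
            rw [Finset.sum_const, Finset.card_univ, Fintype.card_fin, nsmul_eq_mul,
              ← ENNReal.ofReal_add hpn hpn,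
              ← ENNReal.ofReal_natCast n, ← ENNReal.ofReal_mul (Nat.cast_nonneg n)]
            congr 1
            field_simp
            ring
    have happ := hlhs ν hprob (fun i => hINT _) (fun i j => hINT _) hmean hcov
    have hfinal : (1:ℝ) - ε ≤ p :=
      (ENNReal.ofReal_le_ofReal_iff hp0).1 (le_trans happ hbound)
    linarith [hp1]


set_option maxHeartbeats 1000000 in
/-- Distributionally robust linear chance constraint (Lemma 1):
`inf_{x ~ (μ,S)} Pr(aᵀx + b ≤ 0) ≥ 1 − ε` iff
`aᵀμ + b + √((1−ε)/ε)·√(aᵀSa) ≤ 0`. -/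
theorem drcc_linear_iff (n : ℕ) (μ : Fin n → ℝ) (S : Matrix (Fin n) (Fin n) ℝ)
    (hS : S.PosSemidef) (a : Fin n → ℝ) (b : ℝ) (ε : ℝ) (hε0 : 0 < ε) (hε1 : ε < 1) :
    (∀ ν : Measure (Fin n → ℝ), IsProbabilityMeasure ν →
      (∀ i, Integrable (fun x => x i) ν) →
      (∀ i j, Integrable (fun x => (x i - μ i) * (x j - μ j)) ν) →
      (∀ i, ∫ x, x i ∂ν = μ i) →
      (∀ i j, ∫ x, (x i - μ i) * (x j - μ j) ∂ν = S i j) →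
      ν {x | a ⬝ᵥ x + b ≤ 0} ≥ ENNReal.ofReal (1 - ε)) ↔
    a ⬝ᵥ μ + b + Real.sqrt ((1 - ε) / ε) * Real.sqrt (a ⬝ᵥ S.mulVec a) ≤ 0 := by
  constructor
  · intro hlhs
    exact drcc_forward n μ S hS a b ε hε0 hε1 hlhs
  · intro h ν hprob hint1 hint2 hm1 hm2
    exact drcc_backward n μ S hS a b ε hε0 hε1 h ν hprob hint1 hint2 hm1 hm2
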